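/- arXiv:2108.04323 — 3 statements merged into one kernel-verified Lean document; each statement's English description precedes it below -/
import Mathlib

section
/- Let $\pi$ be a permutation of $\{1,\ldots,n\}$ and let $A \subseteq \{1,\ldots,n\}$ be a set such that $\pi(i) \neq i$ for every $i \in A$. Then there exists a subset $B \subseteq A$ with $|B| \geq |A|/3$ such that $\pi(i) \notin B$ for every $i \in B$. -/
theorem stmt_0 (n : ℕ) (π : Equiv.Perm (Fin n)) (A : Finset (Fin n))
    (hA : ∀ i ∈ A, π i ≠ i) :
    ∃ B ⊆ A, A.card ≤ 3 * B.card ∧ ∀ i ∈ B, π i ∉ B := by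
  induction A using Finset.strongInduction with
  | _ A ih =>
    rcases A.eq_empty_or_nonempty with rfl | ⟨i, hi⟩
    · exact ⟨∅, by simp⟩
    · set A' : Finset (Fin n) := A \ {i, π i, π⁻¹ i} with hA'
      have hiA' : i ∉ A' := by simp [hA']
      have hsub : A' ⊆ A := Finset.sdiff_subset
      have hss : A' ⊂ A := Finset.ssubset_iff_of_subset hsub |>.2 ⟨i, hi, hiA'⟩
      obtain ⟨B', hB'sub, hcard, hB'⟩ := ih A' hss (fun j hj => hA j (hsub hj))
      have hiB' : i ∉ B' := fun h => hiA' (hB'sub h)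
      refine ⟨insert i B', ?_, ?_, ?_⟩
      · intro x hx
        rcases Finset.mem_insert.1 hx with rfl | hx
        · exact hi
        · exact hsub (hB'sub hx)
      · have h1 : A ⊆ A' ∪ {i, π i, π⁻¹ i} := by
          intro x hx
          by_cases hx3 : x ∈ ({i, π i, π⁻¹ i} : Finset (Fin n))
          · exact Finset.mem_union_right _ hx3
          · exact Finset.mem_union_left _ (Finset.mem_sdiff.2 ⟨hx, hx3⟩)
        have h2 : A.card ≤ A'.card + 3 := by
          calc A.card ≤ (A' ∪ {i, π i, π⁻¹ i}).card := Finset.card_le_card h1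
            _ ≤ A'.card + ({i, π i, π⁻¹ i} : Finset (Fin n)).card :=
                Finset.card_union_le _ _
            _ ≤ A'.card + 3 := by
                have : ({i, π i, π⁻¹ i} : Finset (Fin n)).card ≤ 3 :=
                  Finset.card_insert_le _ _ |>.trans
                    (by simpa using Nat.add_le_add_right (Finset.card_insert_le (π i) ({π⁻¹ i} : Finset (Fin n))) 1)
                omega
        rw [Finset.card_insert_of_notMem hiB']
        omega
      · intro x hx
        rcases Finset.mem_insert.1 hx with rfl | hx
        · -- π x = π i; show π i ∉ insert i B'
          intro h
          rcases Finset.mem_insert.1 h with h1 | h1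
          · exact hA x hi h1
          · have := hB'sub h1
            rw [hA'] at this
            simp at this
        · -- x ∈ B'
          intro h
          rcases Finset.mem_insert.1 h with h1 | h1
          · -- π x = i, so x = π⁻¹ i, but x ∈ A'
            have hxA' := hB'sub hx
            rw [hA'] at hxA'
            simp at hxA'
            exact hxA'.2.2.2 (by rw [← h1]; simp)
          · exact hB' x hx h1
end

section
/- Let $(X(i,j))_{1 \le i < j \le n}$ be i.i.d. Bernoulli(1/2) random variables representing the edges of a $G(n,1/2)$ random graph (with $X(j,i) := X(i,j)$). Let $\pi \in S_n$, $1 \le m \le n$, and let $k = |\{i \le m : \pi(i) = i\}|$. Then there exist positive universal constants $C_1, C_2$ (independent of $n$, $m$, $\pi$) such that $\mathbb{P}(X(i,j) = X(\pi(i), \pi(j)) \text{ for all } 1 \le i < j \le m) \le C_1 e^{-C_2 (m-k) m}$. -/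
open MeasureTheory ProbabilityTheory
open scoped ENNReal

namespace Stmt3Aux

variable {n : ℕ}

abbrev PairIdx (n : ℕ) := {p : Fin n × Fin n // p.1 < p.2}

def mkPair (i j : Fin n) (h : i ≠ j) : PairIdx n :=
  ⟨(min i j, max i j), min_lt_max.mpr h⟩

lemma mkPair_comm (i j : Fin n) (h : i ≠ j) : mkPair i j h = mkPair j i h.symm := by
  simp [mkPair, min_comm, max_comm]

lemma mkPair_of_lt {i j : Fin n} (h : i < j) (h' : i ≠ j) : mkPair i j h' = ⟨(i, j), h⟩ := by
  simp [mkPair, min_eq_left h.le, max_eq_right h.le]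

lemma mkPair_eq_iff {a b c d : Fin n} (hab : a ≠ b) (hcd : c ≠ d) :
    mkPair a b hab = mkPair c d hcd ↔ (a = c ∧ b = d) ∨ (a = d ∧ b = c) := by
  constructor
  · intro h
    have h1 := congrArg (fun p : PairIdx n => p.1.1) h
    have h2 := congrArg (fun p : PairIdx n => p.1.2) h
    simp only [mkPair] at h1 h2
    rcases le_total a b with hab' | hab' <;> rcases le_total c d with hcd' | hcd' <;>
      simp [min_eq_left, min_eq_right, max_eq_right, max_eq_left, hab', hcd'] at h1 h2 <;> tauto
  · rintro (⟨rfl, rfl⟩ | ⟨rfl, rfl⟩)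
    · rfl
    · exact mkPair_comm _ _ _


def pairMap (π : Equiv.Perm (Fin n)) (p : PairIdx n) : PairIdx n :=
  mkPair (π p.1.1) (π p.1.2) (fun h => absurd (π.injective h) p.2.ne)

lemma pairMap_inj (π : Equiv.Perm (Fin n)) : Function.Injective (pairMap π) := by
  rintro ⟨⟨a, b⟩, hab⟩ ⟨⟨c, d⟩, hcd⟩ h
  simp only [pairMap, mkPair_eq_iff] at h
  rcases h with ⟨h1, h2⟩ | ⟨h1, h2⟩
  · have := π.injective h1; have := π.injective h2
    apply Subtype.ext; simp_all
  · have e1 := π.injective h1; have e2 := π.injective h2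
    subst e1; subst e2
    exact absurd hcd (lt_asymm hab)

noncomputable def pairPerm (π : Equiv.Perm (Fin n)) : Equiv.Perm (PairIdx n) :=
  Equiv.ofBijective (pairMap π) (Finite.injective_iff_bijective.mp (pairMap_inj π))

lemma pairPerm_apply (π : Equiv.Perm (Fin n)) (p : PairIdx n) :
    pairPerm π p = pairMap π p := rfl

lemma greedy {α : Type*} [DecidableEq α] (e : Equiv.Perm α) :
    ∀ N (S : Finset α), S.card ≤ N → (∀ p ∈ S, e p ≠ p) →
    ∃ T ⊆ S, (∀ t ∈ T, e t ∉ T) ∧ S.card ≤ 3 * T.card := by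
  intro N
  induction N with
  | zero =>
    intro S hS _
    exact ⟨∅, Finset.empty_subset _, by simp, by omega⟩
  | succ N ih =>
    intro S hS hfix
    rcases S.eq_empty_or_nonempty with rfl | ⟨p, hp⟩
    · exact ⟨∅, Finset.empty_subset _, by simp, by simp⟩
    · set S' := S.filter (fun q => q ≠ p ∧ q ≠ e p ∧ q ≠ e.symm p) with hS'def
      have hS'sub : S' ⊆ S := Finset.filter_subset _ _
      have hpS' : p ∉ S' := by simp [hS'def]
      have hcard' : S'.card ≤ N := by
        have : S' ⊆ S.erase p := by
          intro q hq
          rw [Finset.mem_erase]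
          exact ⟨(Finset.mem_filter.mp hq).2.1, hS'sub hq⟩
        have h1 := Finset.card_le_card this
        have h2 := Finset.card_erase_of_mem hp
        omega
      obtain ⟨T', hT'sub, hT'good, hT'card⟩ := ih S' hcard'
        (fun q hq => hfix q (hS'sub hq))
      have hpT' : p ∉ T' := fun h => hpS' (hT'sub h)
      refine ⟨insert p T', ?_, ?_, ?_⟩
      · intro q hq
        rcases Finset.mem_insert.mp hq with rfl | hq'
        · exact hp
        · exact hS'sub (hT'sub hq')
      · intro t ht
        rcases Finset.mem_insert.mp ht with rfl | ht'
        · intro hc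
          rcases Finset.mem_insert.mp hc with h | h
          · exact hfix t hp h
          · exact (Finset.mem_filter.mp (hT'sub h)).2.2.1 rfl
        · intro hc
          rcases Finset.mem_insert.mp hc with h | h
          · have : t = e.symm p := by rw [Equiv.eq_symm_apply]; exact h
            exact (Finset.mem_filter.mp (hT'sub ht')).2.2.2 this
          · exact hT'good t ht' h
      · have hdrop : S.card ≤ S'.card + 3 := by
          have hsplit := Finset.card_filter_add_card_filter_not
            (s := S) (p := fun q => q ≠ p ∧ q ≠ e p ∧ q ≠ e.symm p)
          have hsub3 : S.filter (fun q => ¬(q ≠ p ∧ q ≠ e p ∧ q ≠ e.symm p)) ⊆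
              {p, e p, e.symm p} := by
            intro q hq
            have := (Finset.mem_filter.mp hq).2
            simp only [Finset.mem_insert, Finset.mem_singleton]
            tauto
          have h3 := Finset.card_le_card hsub3
          have h4 : ({p, e p, e.symm p} : Finset α).card ≤ 3 :=
            (Finset.card_insert_le _ _).trans (by
              have := Finset.card_insert_le (e p) ({e.symm p} : Finset α)
              simp only [Finset.card_singleton] at this ⊢
              omega)
          have hsc : S'.card = (S.filter (fun q => q ≠ p ∧ q ≠ e p ∧ q ≠ e.symm p)).card := by
            rw [hS'def]
          omega
        have hins : (insert p T').card = T'.card + 1 := Finset.card_insert_of_notMem hpT'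
        omega

lemma card_filter_lt (n m : ℕ) (h : m ≤ n) :
    (Finset.univ.filter (fun i : Fin n => (i : ℕ) < m)).card = m := by
  have key : (Finset.univ.filter (fun i : Fin n => (i : ℕ) < m)) =
      (Finset.range m).attachFin (fun x hx => lt_of_lt_of_le (Finset.mem_range.mp hx) h) := by
    ext a
    simp [Finset.mem_attachFin]
  rw [key, Finset.card_attachFin, Finset.card_range]


lemma prob_core {ι : Type*} [Fintype ι] [DecidableEq ι]
    {Ω : Type} [MeasurableSpace Ω] (μ : Measure Ω) [IsProbabilityMeasure μ]
    (Y : ι → Ω → Bool)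
    (hhalf : ∀ q b, μ {ω | Y q ω = b} = 1/2)
    (hind : iIndepFun Y μ)
    (e : Equiv.Perm ι) (T : Finset ι)
    (hgood : ∀ t ∈ T, e t ∉ T) :
    μ {ω | ∀ t ∈ T, Y t ω = Y (e t) ω} ≤ (1/2 : ℝ≥0∞) ^ T.card := by
  classical
  set U : Finset ι := T ∪ T.image e with hU
  have hdisj : Disjoint T (T.image e) := by
    rw [Finset.disjoint_right]
    intro q hq hqT
    obtain ⟨t, ht, rfl⟩ := Finset.mem_image.mp hq
    exact hgood t ht hqT
  have hUcard : U.card = 2 * T.card := by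
    rw [hU, Finset.card_union_of_disjoint hdisj,
      Finset.card_image_of_injective _ e.injective]
    ring
  set w : ({x // x ∈ T} → Bool) → ι → Bool := fun v q =>
    if h : q ∈ T then v ⟨q, h⟩ else
      if h' : e.symm q ∈ T then v ⟨e.symm q, h'⟩ else true with hw
  have hsub : {ω | ∀ t ∈ T, Y t ω = Y (e t) ω} ⊆
      ⋃ v : {x // x ∈ T} → Bool, ⋂ q ∈ U, Y q ⁻¹' {w v q} := by
    intro ω hω
    refine Set.mem_iUnion.mpr ⟨fun t => Y t.1 ω, ?_⟩
    simp only [Set.mem_iInter]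
    intro q hq
    simp only [Set.mem_preimage, Set.mem_singleton_iff]
    by_cases hqT : q ∈ T
    · simp [hw, hqT]
    · rcases Finset.mem_union.mp hq with h | h
      · exact absurd h hqT
      · obtain ⟨t, ht, rfl⟩ := Finset.mem_image.mp h
        have het : e.symm (e t) = t := e.symm_apply_apply t
        have : (e.symm (e t)) ∈ T := by rw [het]; exact ht
        simp only [hw, dif_neg hqT, dif_pos this]
        have := hω t ht
        simp_all
  have hEv : ∀ v : {x // x ∈ T} → Bool,
      μ (⋂ q ∈ U, Y q ⁻¹' {w v q}) = (1/2 : ℝ≥0∞) ^ (2 * T.card) := by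
    intro v
    rw [hind.meas_biInter (fun q _ => ⟨{w v q}, trivial, rfl⟩)]
    rw [← hUcard, ← Finset.prod_const]
    apply Finset.prod_congr rfl
    intro q _
    have : Y q ⁻¹' {w v q} = {ω | Y q ω = w v q} := rfl
    rw [this, hhalf]
  calc μ {ω | ∀ t ∈ T, Y t ω = Y (e t) ω}
      ≤ μ (⋃ v : {x // x ∈ T} → Bool, ⋂ q ∈ U, Y q ⁻¹' {w v q}) := measure_mono hsub
    _ ≤ ∑' v : {x // x ∈ T} → Bool, μ (⋂ q ∈ U, Y q ⁻¹' {w v q}) := measure_iUnion_le _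
    _ = ∑' _v : {x // x ∈ T} → Bool, (1/2 : ℝ≥0∞) ^ (2 * T.card) := by
        exact tsum_congr hEv
    _ = (Fintype.card ({x // x ∈ T} → Bool)) • ((1/2 : ℝ≥0∞) ^ (2 * T.card)) := by
        rw [tsum_fintype, Finset.sum_const, Finset.card_univ]
    _ = (2 : ℝ≥0∞) ^ T.card * ((1/2 : ℝ≥0∞) ^ (2 * T.card)) := by
        rw [Fintype.card_fun, Fintype.card_coe, Fintype.card_bool]
        simp [nsmul_eq_mul]
    _ = (1/2 : ℝ≥0∞) ^ T.card := by
        rw [two_mul, pow_add, ← mul_assoc, ← mul_pow]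
        norm_num [ENNReal.mul_inv_cancel]


lemma pairMap_mkPair (π : Equiv.Perm (Fin n)) (i j : Fin n) (h : i ≠ j) :
    pairMap π (mkPair i j h) = mkPair (π i) (π j) (fun hc => h (π.injective hc)) := by
  rcases lt_or_gt_of_ne h with hlt | hlt
  · rw [mkPair_of_lt hlt h]; rfl
  · rw [mkPair_comm i j h, mkPair_of_lt hlt h.symm]
    exact mkPair_comm (π j) (π i) (fun hc => h.symm (π.injective hc))

lemma count_lemma (π : Equiv.Perm (Fin n)) (m : ℕ) (hmn : m ≤ n) :
    (m - (Finset.univ.filter (fun i : Fin n => π i = i ∧ (i : ℕ) < m)).card) * (m - 2) ≤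
      2 * (Finset.univ.filter
        (fun p : PairIdx n => (p.1.2 : ℕ) < m ∧ pairMap π p ≠ p)).card := by
  classical
  set k := (Finset.univ.filter (fun i : Fin n => π i = i ∧ (i : ℕ) < m)).card with hk
  set S := Finset.univ.filter
    (fun p : PairIdx n => (p.1.2 : ℕ) < m ∧ pairMap π p ≠ p) with hS
  set F := Finset.univ.filter (fun i : Fin n => ¬ π i = i ∧ (i : ℕ) < m) with hF
  have hFcard : F.card = m - k := by
    have h1 : (Finset.univ.filter (fun i : Fin n => (i : ℕ) < m)).card = m :=
      card_filter_lt n m hmn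
    have hsplit := Finset.card_filter_add_card_filter_not
      (s := Finset.univ.filter (fun i : Fin n => (i : ℕ) < m)) (p := fun i => π i = i)
    have e1 : (Finset.univ.filter (fun i : Fin n => (i : ℕ) < m)).filter
        (fun i => π i = i) = Finset.univ.filter (fun i : Fin n => π i = i ∧ (i : ℕ) < m) := by
      ext i; simp [Finset.mem_filter]; tauto
    have e2 : (Finset.univ.filter (fun i : Fin n => (i : ℕ) < m)).filter
        (fun i => ¬ π i = i) = F := by
      ext i; simp [hF, Finset.mem_filter]; tauto
    rw [e1, e2, h1] at hsplit
    omega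
  set J : Fin n → Finset (Fin n) :=
    fun i => Finset.univ.filter (fun j : Fin n => (j : ℕ) < m ∧ j ≠ i ∧ j ≠ π i) with hJ
  set D : Finset (Fin n × Fin n) := F.biUnion
    (fun i => (J i).map ⟨fun j => (i, j), fun a b hab => by simpa using hab⟩) with hD
  have hmemD : ∀ q ∈ D, q.1 ∈ F ∧ q.2 ∈ J q.1 := by
    intro q hq
    rw [Finset.mem_biUnion] at hq
    obtain ⟨i, hi, hq⟩ := hq
    rw [Finset.mem_map] at hq
    obtain ⟨j, hj, rfl⟩ := hq
    exact ⟨hi, hj⟩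
  have hJcard : ∀ i : Fin n, m - 2 ≤ (J i).card := by
    intro i
    have hsub : (Finset.univ.filter (fun j : Fin n => (j : ℕ) < m)) \ {i, π i} ⊆ J i := by
      intro j hj
      rw [Finset.mem_sdiff] at hj
      obtain ⟨hj1, hj2⟩ := hj
      simp only [Finset.mem_insert, Finset.mem_singleton, not_or] at hj2
      simp only [hJ, Finset.mem_filter, Finset.mem_univ, true_and]
      exact ⟨(Finset.mem_filter.mp hj1).2, hj2.1, hj2.2⟩
    have h1 := Finset.card_le_card hsub
    have h2 := Finset.card_le_card_sdiff_add_card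
      (s := Finset.univ.filter (fun j : Fin n => (j : ℕ) < m)) (t := {i, π i})
    have h3 : ({i, π i} : Finset (Fin n)).card ≤ 2 := by
      apply (Finset.card_insert_le _ _).trans; simp
    have h4 : (Finset.univ.filter (fun j : Fin n => (j : ℕ) < m)).card = m :=
      card_filter_lt n m hmn
    omega
  have hDcard : F.card * (m - 2) ≤ D.card := by
    have hdisj : ∀ a ∈ F, ∀ b ∈ F, a ≠ b → Disjoint
        ((J a).map ⟨fun j => (a, j), fun x y hxy => by simpa using hxy⟩)
        ((J b).map ⟨fun j => (b, j), fun x y hxy => by simpa using hxy⟩) := by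
      intro a _ b _ hab
      rw [Finset.disjoint_left]
      intro q hq1 hq2
      rw [Finset.mem_map] at hq1 hq2
      obtain ⟨j1, _, rfl⟩ := hq1
      obtain ⟨j2, _, h2⟩ := hq2
      exact hab (congrArg Prod.fst h2).symm
    rw [hD, Finset.card_biUnion hdisj]
    calc F.card * (m - 2) = ∑ _i ∈ F, (m - 2) := by rw [Finset.sum_const, smul_eq_mul, mul_comm]
      _ ≤ ∑ i ∈ F, ((J i).map ⟨fun j => (i, j), fun x y hxy => by simpa using hxy⟩).card := by
          apply Finset.sum_le_sum
          intro i _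
          rw [Finset.card_map]
          exact hJcard i
  have hD2 : D.card ≤ 2 * S.card := by
    rcases D.eq_empty_or_nonempty with hDe | ⟨⟨i0, j0⟩, hq0⟩
    · simp [hDe]
    · have hmem0 := hmemD _ hq0
      have hne0 : i0 ≠ j0 := by
        have := (Finset.mem_filter.mp hmem0.2).2.2.1
        exact this.symm
      set p0 : PairIdx n := mkPair i0 j0 hne0 with hp0
      set f : Fin n × Fin n → PairIdx n :=
        fun q => if h : q.1 ≠ q.2 then mkPair q.1 q.2 h else p0 with hf
      apply Finset.card_le_mul_card_image_of_maps_to (f := f) (t := S)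
      · intro q hq
        obtain ⟨hq1, hq2⟩ := hmemD q hq
        rw [hF, Finset.mem_filter] at hq1
        rw [hJ, Finset.mem_filter] at hq2
        obtain ⟨_, hfix, him⟩ := hq1
        obtain ⟨_, hjm, hji, hjpi⟩ := hq2
        have hij : q.1 ≠ q.2 := hji.symm
        rw [hS, Finset.mem_filter]
        refine ⟨Finset.mem_univ _, ?_, ?_⟩
        · rw [hf]
          simp only [dif_pos hij]
          show ((max q.1 q.2 : Fin n) : ℕ) < m
          rcases max_choice q.1 q.2 with h | h <;> rw [h]
          · exact him
          · exact hjm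
        · rw [hf]
          simp only [dif_pos hij]
          rw [pairMap_mkPair, Ne, mkPair_eq_iff]
          rintro (⟨h1, _⟩ | ⟨h1, _⟩)
          · exact hfix h1
          · exact hjpi h1.symm
      · rintro ⟨⟨x, y⟩, hxy⟩ _
        have key : D.filter (fun q => f q = ⟨(x, y), hxy⟩) ⊆ {(x, y), (y, x)} := by
          intro q hq
          rw [Finset.mem_filter] at hq
          obtain ⟨hqD, hqf⟩ := hq
          have hij : q.1 ≠ q.2 := by
            have := (Finset.mem_filter.mp (hmemD q hqD).2).2.2.1
            exact this.symm
          rw [hf] at hqf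
          simp only [dif_pos hij] at hqf
          have hb : (⟨(x, y), hxy⟩ : PairIdx n) = mkPair x y hxy.ne :=
            (mkPair_of_lt hxy hxy.ne).symm
          rw [hb, mkPair_eq_iff] at hqf
          simp only [Finset.mem_insert, Finset.mem_singleton]
          rcases hqf with ⟨h1, h2⟩ | ⟨h1, h2⟩
          · left; rw [← h1, ← h2]
          · right; rw [← h1, ← h2]
        apply (Finset.card_le_card key).trans
        apply (Finset.card_insert_le _ _).trans
        simp
  calc (m - k) * (m - 2) = F.card * (m - 2) := by rw [hFcard]
    _ ≤ D.card := hDcard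
    _ ≤ 2 * S.card := hD2


lemma X_mkPair {β : Type*} (X : Fin n → Fin n → β) (hs : ∀ i j, X i j = X j i)
    (a b : Fin n) (h : a ≠ b) :
    X (mkPair a b h).1.1 (mkPair a b h).1.2 = X a b := by
  rcases lt_or_gt_of_ne h with hlt | hlt
  · rw [mkPair_of_lt hlt h]
  · rw [mkPair_comm a b h, mkPair_of_lt hlt h.symm]
    exact hs b a

end Stmt3Aux

theorem stmt_3 :
    ∃ C₁ C₂ : ℝ, 0 < C₁ ∧ 0 < C₂ ∧
      ∀ (n m : ℕ), 1 ≤ m → m ≤ n →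
      ∀ (Ω : Type) (_ : MeasurableSpace Ω) (μ : Measure Ω), IsProbabilityMeasure μ →
      ∀ (X : Fin n → Fin n → Ω → Bool),
        (∀ i j, Measurable (X i j)) →
        (∀ i j, X i j = X j i) →
        (∀ i j : Fin n, i < j → μ {ω | X i j ω = true} = 1 / 2) →
        iIndepFun
          (fun p : {p : Fin n × Fin n // p.1 < p.2} => X p.1.1 p.1.2) μ →
      ∀ (π : Equiv.Perm (Fin n)),
        ∀ k : ℕ, k = (Finset.univ.filter (fun i : Fin n => π i = i ∧ (i : ℕ) < m)).card →
        μ {ω | ∀ i j : Fin n, i < j → (j : ℕ) < m → X i j ω = X (π i) (π j) ω}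
          ≤ ENNReal.ofReal (C₁ * Real.exp (-C₂ * ((m : ℝ) - k) * m)) := by
  classical
  refine ⟨4, Real.log 2 / 12, by norm_num,
    div_pos (Real.log_pos (by norm_num)) (by norm_num), ?_⟩
  intro n m h1m hmn Ω mΩ μ hprob X hXmeas hXsymm hXhalf hXindep π k hk
  set Y : Stmt3Aux.PairIdx n → Ω → Bool := fun p => X p.1.1 p.1.2 with hY
  have hhalf : ∀ (q : Stmt3Aux.PairIdx n) (b : Bool), μ {ω | Y q ω = b} = 1 / 2 := by
    intro q b
    cases b
    · have hms : MeasurableSet {ω | Y q ω = true} :=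
        (hXmeas q.1.1 q.1.2) (measurableSet_singleton true)
      have hc : {ω | Y q ω = false} = {ω | Y q ω = true}ᶜ := by
        ext ω; simp
      rw [hc, measure_compl hms (measure_ne_top μ _), measure_univ,
        hXhalf q.1.1 q.1.2 q.2]
      rw [one_div, ENNReal.one_sub_inv_two]
    · exact hXhalf q.1.1 q.1.2 q.2
  set S := Finset.univ.filter
    (fun p : Stmt3Aux.PairIdx n => (p.1.2 : ℕ) < m ∧ Stmt3Aux.pairMap π p ≠ p) with hS
  obtain ⟨T, hTS, hTgood, hScard⟩ := Stmt3Aux.greedy (Stmt3Aux.pairPerm π) S.card S le_rfl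
    (by
      intro p hp
      rw [Stmt3Aux.pairPerm_apply]
      exact (Finset.mem_filter.mp hp).2.2)
  have hsub : {ω | ∀ i j : Fin n, i < j → (j : ℕ) < m → X i j ω = X (π i) (π j) ω} ⊆
      {ω | ∀ t ∈ T, Y t ω = Y (Stmt3Aux.pairPerm π t) ω} := by
    intro ω hω t ht
    have htS := hTS ht
    rw [hS, Finset.mem_filter] at htS
    obtain ⟨-, hm2, -⟩ := htS
    obtain ⟨⟨i, j⟩, hij⟩ := t
    have h2 : Y (Stmt3Aux.pairPerm π ⟨(i, j), hij⟩) ω = X (π i) (π j) ω := by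
      rw [Stmt3Aux.pairPerm_apply]
      have : Stmt3Aux.pairMap π ⟨(i, j), hij⟩ =
          Stmt3Aux.mkPair (π i) (π j) (fun hc => hij.ne (π.injective hc)) := rfl
      rw [hY, this]
      exact congrFun (Stmt3Aux.X_mkPair X hXsymm (π i) (π j) _) ω
    rw [h2]
    exact hω i j hij hm2
  have hmain := Stmt3Aux.prob_core μ Y hhalf hXindep (Stmt3Aux.pairPerm π) T hTgood
  have hμ : μ {ω | ∀ i j : Fin n, i < j → (j : ℕ) < m → X i j ω = X (π i) (π j) ω}
      ≤ (1/2 : ℝ≥0∞) ^ T.card := le_trans (measure_mono hsub) hmain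
  -- counting
  have hcount := Stmt3Aux.count_lemma π m hmn
  rw [← hk] at hcount
  rw [← hS] at hcount
  have h6 : (m - k) * (m - 2) ≤ 6 * T.card := by
    refine hcount.trans ?_
    omega
  have hnat : (m - k) * m ≤ 12 * T.card + 24 := by
    rcases le_or_gt 4 m with h4 | h4
    · have hm2 : m ≤ 2 * (m - 2) := by omega
      calc (m - k) * m ≤ (m - k) * (2 * (m - 2)) := Nat.mul_le_mul_left _ hm2
        _ = 2 * ((m - k) * (m - 2)) := by ring
        _ ≤ 2 * (6 * T.card) := Nat.mul_le_mul_left _ h6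
        _ ≤ 12 * T.card + 24 := by omega
    · calc (m - k) * m ≤ 3 * 3 := Nat.mul_le_mul (by omega) (by omega)
        _ ≤ 12 * T.card + 24 := by omega
  have hkm : k ≤ m := by
    rw [hk]
    calc (Finset.univ.filter (fun i : Fin n => π i = i ∧ (i : ℕ) < m)).card
        ≤ (Finset.univ.filter (fun i : Fin n => (i : ℕ) < m)).card :=
          Finset.card_le_card (by
            intro i hi
            simp only [Finset.mem_filter] at *
            exact ⟨hi.1, hi.2.2⟩)
      _ = m := Stmt3Aux.card_filter_lt n m hmn
  refine hμ.trans ?_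
  have hofr : ((1 : ℝ≥0∞)/2) ^ T.card = ENNReal.ofReal ((1/2 : ℝ) ^ T.card) := by
    rw [ENNReal.ofReal_pow (by norm_num)]
    congr 1
    rw [one_div, one_div, ENNReal.ofReal_inv_of_pos (by norm_num), ENNReal.ofReal_ofNat]
  rw [hofr]
  apply ENNReal.ofReal_le_ofReal
  have hT : ((m : ℝ) - k) * m ≤ 12 * T.card + 24 := by
    calc ((m : ℝ) - k) * m = (((m - k) * m : ℕ) : ℝ) := by
          push_cast [Nat.cast_sub hkm]; ring
      _ ≤ ((12 * T.card + 24 : ℕ) : ℝ) := Nat.cast_le.mpr hnat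
      _ = 12 * T.card + 24 := by push_cast; ring
  have hlog2 : 0 < Real.log 2 := Real.log_pos (by norm_num)
  have lhs : (1/2 : ℝ) ^ T.card = Real.exp (-((T.card : ℝ) * Real.log 2)) := by
    rw [← Real.exp_log (show (0:ℝ) < 1/2 by norm_num), ← Real.exp_nat_mul, one_div,
      Real.log_inv]
    ring_nf
  rw [lhs]
  have hrhs : 4 * Real.exp (-(Real.log 2 / 12) * (((m : ℝ) - k)) * m) =
      Real.exp (Real.log 4 + -(Real.log 2 / 12) * (((m : ℝ) - k)) * m) := by
    rw [Real.exp_add, Real.exp_log (by norm_num)]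
  rw [hrhs]
  apply Real.exp_le_exp.mpr
  have hlog4 : Real.log 4 = 2 * Real.log 2 := by
    rw [show (4:ℝ) = 2 ^ 2 by norm_num, Real.log_pow]
    push_cast; ring
  rw [hlog4]
  have key : (Real.log 2 / 12) * ((((m : ℝ) - k)) * m) ≤
      (Real.log 2 / 12) * (12 * T.card + 24) :=
    mul_le_mul_of_nonneg_left hT (by positivity)
  nlinarith [key]
end

section
/- For $n \ge 1$ and $2n/3 \le m \le n$, define $\phi(m,n) = \sum_{\pi \in S_n} \mathbb{P}(X(i,j) = X(\pi(i),\pi(j)) \text{ for all } 1 \le i < j \le m)$, where $(X(i,j))_{1 \le i < j \le n}$ are i.i.d. Bernoulli(1/2). Then there exist positive universal constants $K_1, K_2$ such that $\phi(m,n) \le K_1 e^{K_2 (n-m) \log(n-m)}$, where $0 \log 0$ is interpreted as $0$. -/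
open MeasureTheory ProbabilityTheory
open scoped ENNReal

private lemma greedy {n : ℕ} (π : Equiv.Perm (Fin n)) :
    ∀ (M : Finset (Fin n)), (∀ x ∈ M, π x ≠ x) →
    ∃ I : Finset (Fin n), I ⊆ M ∧ (∀ x ∈ I, π x ∉ I) ∧ M.card ≤ 3 * I.card := by
  classical
  intro M
  induction M using Finset.strongInduction with
  | _ M ih =>
    intro hM
    rcases M.eq_empty_or_nonempty with rfl | ⟨x, hx⟩
    · exact ⟨∅, by simp⟩
    · set M' := M \ {x, π x, π.symm x} with hM'def
      have hsub : M' ⊆ M := Finset.sdiff_subset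
      have hxM' : x ∉ M' := by simp [hM'def]
      have hss : M' ⊂ M := Finset.ssubset_iff_of_subset hsub |>.mpr ⟨x, hx, hxM'⟩
      obtain ⟨I', hI'sub, hI'good, hI'card⟩ := ih M' hss (fun y hy => hM y (hsub hy))
      have hπx : π x ∉ M' := by simp [hM'def]
      have hπinvx : π.symm x ∉ M' := by simp [hM'def]
      have hxI' : x ∉ I' := fun h => hxM' (hI'sub h)
      refine ⟨insert x I', ?_, ?_, ?_⟩
      · intro a haI
        rcases Finset.mem_insert.mp haI with rfl | h
        · exact hx
        · exact hsub (hI'sub h)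
      · intro a haI hπa
        rcases Finset.mem_insert.mp haI with rfl | h
        · rcases Finset.mem_insert.mp hπa with h' | h'
          · exact hM a hx h'
          · exact hπx (hI'sub h')
        · rcases Finset.mem_insert.mp hπa with h' | h'
          · apply hπinvx
            have : a = π.symm x := by
              rw [← h']; simp
            exact this ▸ hI'sub h
          · exact hI'good a h h'
      · have h1 : M.card ≤ M'.card + 3 := by
          have : M ⊆ M' ∪ {x, π x, π.symm x} := by
            intro y hy
            by_cases h : y ∈ ({x, π x, π.symm x} : Finset (Fin n))
            · exact Finset.mem_union_right _ h
            · exact Finset.mem_union_left _ (Finset.mem_sdiff.mpr ⟨hy, h⟩)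
          calc M.card ≤ (M' ∪ {x, π x, π.symm x}).card := Finset.card_le_card this
            _ ≤ M'.card + ({x, π x, π.symm x} : Finset (Fin n)).card := Finset.card_union_le _ _
            _ ≤ M'.card + 3 := by
                have : ({x, π x, π.symm x} : Finset (Fin n)).card ≤ 3 :=
                  (Finset.card_insert_le _ _).trans (by
                    have := Finset.card_insert_le (π x) ({π.symm x} : Finset (Fin n))
                    simp at this ⊢; omega)
                omega
        rw [Finset.card_insert_of_notMem hxI']
        omega

section Core

variable {n : ℕ} {Ω : Type} [MeasurableSpace Ω] {μ : Measure Ω} [IsProbabilityMeasure μ]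
variable {X : Fin n → Fin n → Ω → Bool}

private lemma measurableSet_eq_coord {ι : Type*} (a b : ι) :
    MeasurableSet {g : ι → Bool | g a = g b} := by
  have h : {g : ι → Bool | g a = g b} =
      (((fun g : ι → Bool => g a) ⁻¹' {true}) ∩ ((fun g : ι → Bool => g b) ⁻¹' {true})) ∪
      (((fun g : ι → Bool => g a) ⁻¹' {false}) ∩ ((fun g : ι → Bool => g b) ⁻¹' {false})) := by
    ext g
    simp only [Set.mem_setOf_eq, Set.mem_union, Set.mem_inter_iff, Set.mem_preimage,
      Set.mem_singleton_iff]
    cases hga : g a <;> cases hgb : g b <;> simp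
  rw [h]
  exact ((measurable_pi_apply a (MeasurableSet.singleton true)).inter
      (measurable_pi_apply b (MeasurableSet.singleton true))).union
    ((measurable_pi_apply a (MeasurableSet.singleton false)).inter
      (measurable_pi_apply b (MeasurableSet.singleton false)))

private lemma half_event
    (hmeas : ∀ i j, Measurable (X i j))
    (hhalf : ∀ i j : Fin n, i < j → μ {ω | X i j ω = true} = 1 / 2)
    (hind : iIndepFun
      (fun p : {p : Fin n × Fin n // p.1 < p.2} => X p.1.1 p.1.2) μ)
    (p q : {p : Fin n × Fin n // p.1 < p.2}) (hpq : p ≠ q) :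
    μ {ω | X p.1.1 p.1.2 ω = X q.1.1 q.1.2 ω} = 1 / 2 := by
  set Y : {p : Fin n × Fin n // p.1 < p.2} → Ω → Bool := fun p => X p.1.1 p.1.2 with hY
  have hindep : IndepFun (Y p) (Y q) μ := hind.indepFun hpq
  have htrue : ∀ r : {p : Fin n × Fin n // p.1 < p.2}, μ (Y r ⁻¹' {true}) = 1 / 2 := by
    intro r
    have : Y r ⁻¹' {true} = {ω | X r.1.1 r.1.2 ω = true} := by
      ext ω; simp [hY]
    rw [this]; exact hhalf _ _ r.2
  have hfalse : ∀ r : {p : Fin n × Fin n // p.1 < p.2}, μ (Y r ⁻¹' {false}) = 1 / 2 := by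
    intro r
    have hc : Y r ⁻¹' {false} = (Y r ⁻¹' {true})ᶜ := by
      ext ω; cases h : Y r ω <;> simp [h]
    rw [hc, measure_compl ((hmeas _ _) (MeasurableSet.singleton true)) (measure_ne_top μ _),
      htrue, measure_univ]
    simp [one_div, ENNReal.one_sub_inv_two]
  have hsplit : {ω | Y p ω = Y q ω} =
      ((Y p ⁻¹' {true}) ∩ (Y q ⁻¹' {true})) ∪ ((Y p ⁻¹' {false}) ∩ (Y q ⁻¹' {false})) := by
    ext ω
    simp only [Set.mem_setOf_eq, Set.mem_union, Set.mem_inter_iff, Set.mem_preimage,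
      Set.mem_singleton_iff]
    cases h1 : Y p ω <;> cases h2 : Y q ω <;> simp
  have hdisj : Disjoint ((Y p ⁻¹' {true}) ∩ (Y q ⁻¹' {true}))
      ((Y p ⁻¹' {false}) ∩ (Y q ⁻¹' {false})) := by
    rw [Set.disjoint_left]
    rintro ω ⟨h1, -⟩ ⟨h2, -⟩
    simp [Set.mem_preimage] at h1 h2
    rw [h1] at h2; exact Bool.noConfusion h2
  calc μ {ω | Y p ω = Y q ω}
      = μ ((Y p ⁻¹' {true}) ∩ (Y q ⁻¹' {true})) + μ ((Y p ⁻¹' {false}) ∩ (Y q ⁻¹' {false})) := by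
        rw [hsplit]
        exact measure_union hdisj (((hmeas _ _) (MeasurableSet.singleton false)).inter
          ((hmeas _ _) (MeasurableSet.singleton false)))
    _ = μ (Y p ⁻¹' {true}) * μ (Y q ⁻¹' {true}) + μ (Y p ⁻¹' {false}) * μ (Y q ⁻¹' {false}) := by
        rw [hindep.measure_inter_preimage_eq_mul _ _ (MeasurableSet.singleton true)
            (MeasurableSet.singleton true),
          hindep.measure_inter_preimage_eq_mul _ _ (MeasurableSet.singleton false)
            (MeasurableSet.singleton false)]
    _ = 1 / 2 := by
        rw [htrue, htrue, hfalse, hfalse]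
        have h2 : (1/2 : ℝ≥0∞) = ENNReal.ofReal (1/2) := by
          rw [ENNReal.ofReal_div_of_pos] <;> norm_num
        rw [h2, ← ENNReal.ofReal_mul (by norm_num),
          ← ENNReal.ofReal_add (by norm_num) (by norm_num)]
        norm_num

private lemma indep_inter_bound
    (hmeas : ∀ i j, Measurable (X i j))
    (hhalf : ∀ i j : Fin n, i < j → μ {ω | X i j ω = true} = 1 / 2)
    (hind : iIndepFun
      (fun p : {p : Fin n × Fin n // p.1 < p.2} => X p.1.1 p.1.2) μ)
    {γ : Type} [DecidableEq γ] (T : Finset γ)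
    (e f : γ → {p : Fin n × Fin n // p.1 < p.2})
    (hef : ∀ t ∈ T, e t ≠ f t)
    (hdisj : ∀ t ∈ T, ∀ t' ∈ T, t ≠ t' →
      e t ≠ e t' ∧ e t ≠ f t' ∧ f t ≠ e t' ∧ f t ≠ f t') :
    μ (⋂ t ∈ (T : Set γ), {ω | X (e t).1.1 (e t).1.2 ω = X (f t).1.1 (f t).1.2 ω})
      ≤ (1 / 2 : ℝ≥0∞) ^ T.card := by
  classical
  set Y : {p : Fin n × Fin n // p.1 < p.2} → Ω → Bool := fun p => X p.1.1 p.1.2 with hY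
  have hYmeas : ∀ p, Measurable (Y p) := fun p => hmeas _ _
  revert hef hdisj
  induction T using Finset.induction_on with
  | empty => intro _ _; simp
  | @insert a s ha ih =>
    intro hef hdisj
    set A : γ → Set Ω := fun t => {ω | Y (e t) ω = Y (f t) ω} with hA
    have haT : a ∈ insert a s := Finset.mem_insert_self a s
    set S₁ : Finset {p : Fin n × Fin n // p.1 < p.2} := {e a, f a} with hS₁
    set S₂ : Finset {p : Fin n × Fin n // p.1 < p.2} := s.image e ∪ s.image f with hS₂
    have hmem_e : ∀ t ∈ s, e t ∈ S₂ := fun t ht =>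
      Finset.mem_union_left _ (Finset.mem_image_of_mem e ht)
    have hmem_f : ∀ t ∈ s, f t ∈ S₂ := fun t ht =>
      Finset.mem_union_right _ (Finset.mem_image_of_mem f ht)
    have hST : Disjoint S₁ S₂ := by
      rw [Finset.disjoint_left]
      intro x hx hx2
      have hx' : x = e a ∨ x = f a := by simpa [hS₁] using hx
      rw [hS₂, Finset.mem_union] at hx2
      rcases hx2 with hx2 | hx2 <;> rw [Finset.mem_image] at hx2 <;>
        obtain ⟨t, ht, rfl⟩ := hx2
      · have hne : a ≠ t := fun h => ha (h ▸ ht)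
        obtain ⟨h1, h2, h3, h4⟩ := hdisj a haT t (Finset.mem_insert_of_mem ht) hne
        rcases hx' with h | h
        · exact h1 h.symm
        · exact h3 h.symm
      · have hne : a ≠ t := fun h => ha (h ▸ ht)
        obtain ⟨h1, h2, h3, h4⟩ := hdisj a haT t (Finset.mem_insert_of_mem ht) hne
        rcases hx' with h | h
        · exact h2 h.symm
        · exact h4 h.symm
    have hIndepF := hind.indepFun_finset S₁ S₂ hST hYmeas
    set B₁ : Set (↥S₁ → Bool) :=
      {g | g ⟨e a, by simp [hS₁]⟩ = g ⟨f a, by simp [hS₁]⟩} with hB₁def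
    set B₂ : Set (↥S₂ → Bool) :=
      ⋂ (t : {x // x ∈ s}), {g | g ⟨e t.1, hmem_e t.1 t.2⟩ = g ⟨f t.1, hmem_f t.1 t.2⟩} with hB₂def
    have hA_pre : A a = (fun ω (i : ↥S₁) => Y i.1 ω) ⁻¹' B₁ := by
      ext ω; simp [hA, hB₁def]
    have hR_pre : (⋂ t ∈ (s : Set γ), A t) = (fun ω (i : ↥S₂) => Y i.1 ω) ⁻¹' B₂ := by
      ext ω
      simp only [Set.mem_iInter, Set.mem_preimage, hB₂def, Set.mem_setOf_eq, hA,
        Finset.mem_coe, Subtype.forall]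
    have hB₁ : MeasurableSet B₁ := measurableSet_eq_coord _ _
    have hB₂ : MeasurableSet B₂ := MeasurableSet.iInter (fun t => measurableSet_eq_coord _ _)
    have hkey : μ (A a ∩ ⋂ t ∈ (s : Set γ), A t) = μ (A a) * μ (⋂ t ∈ (s : Set γ), A t) := by
      rw [hA_pre, hR_pre]
      exact hIndepF.measure_inter_preimage_eq_mul B₁ B₂ hB₁ hB₂
    have hAa : μ (A a) = 1 / 2 := half_event hmeas hhalf hind _ _ (hef a haT)
    have hrest : μ (⋂ t ∈ (s : Set γ), A t) ≤ (1 / 2 : ℝ≥0∞) ^ s.card :=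
      ih (fun t ht => hef t (Finset.mem_insert_of_mem ht))
        (fun t ht t' ht' h => hdisj t (Finset.mem_insert_of_mem ht) t'
          (Finset.mem_insert_of_mem ht') h)
    calc μ (⋂ t ∈ ((insert a s : Finset γ) : Set γ), A t)
        = μ (A a ∩ ⋂ t ∈ (s : Set γ), A t) := by
          rw [Finset.coe_insert, Set.biInter_insert]
      _ = μ (A a) * μ (⋂ t ∈ (s : Set γ), A t) := hkey
      _ ≤ (1 / 2) * (1 / 2 : ℝ≥0∞) ^ s.card := by
          rw [hAa]; exact mul_le_mul_right hrest _
      _ = (1 / 2 : ℝ≥0∞) ^ (insert a s).card := by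
          rw [Finset.card_insert_of_notMem ha, pow_succ, mul_comm]

private lemma cset_inj {a b c d : Fin n} (hab : a < b) (hcd : c < d)
    (h : ({a, b} : Set (Fin n)) = {c, d}) : a = c ∧ b = d := by
  rcases Set.pair_eq_pair_iff.mp h with ⟨h1, h2⟩ | ⟨h1, h2⟩
  · exact ⟨h1, h2⟩
  · subst h1; subst h2; exact absurd (hab.trans hcd) (lt_irrefl _)

private lemma per_perm_bound
    (hmeas : ∀ i j, Measurable (X i j))
    (hX : ∀ i j, X i j = X j i)
    (hhalf : ∀ i j : Fin n, i < j → μ {ω | X i j ω = true} = 1 / 2)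
    (hind : iIndepFun
      (fun p : {p : Fin n × Fin n // p.1 < p.2} => X p.1.1 p.1.2) μ)
    (m : ℕ) (hm : m ≤ n) (π : Equiv.Perm (Fin n)) :
    μ {ω | ∀ i j : Fin n, i < j → (j : ℕ) < m → X i j ω = X (π i) (π j) ω}
      ≤ (1 / 2 : ℝ≥0∞) ^
          (((Finset.univ.filter (fun x : Fin n => (x : ℕ) < m ∧ π x ≠ x)).card + 2) / 3 *
              (m - (Finset.univ.filter (fun x : Fin n => (x : ℕ) < m ∧ π x ≠ x)).card)
            + Nat.choose (((Finset.univ.filter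
                (fun x : Fin n => (x : ℕ) < m ∧ π x ≠ x)).card + 2) / 3) 2) := by
  classical
  set D : Finset (Fin n) := Finset.univ.filter (fun x : Fin n => (x : ℕ) < m ∧ π x ≠ x) with hDdef
  set d : ℕ := D.card with hd
  set q : ℕ := (d + 2) / 3 with hq
  by_cases hd0 : d = 0
  · have : q = 0 := by rw [hq, hd0]
    rw [this]
    simpa using prob_le_one
  -- d ≥ 1
  obtain ⟨I, hIsub, hIgood, hIcard⟩ := greedy π D (fun x hx => (Finset.mem_filter.mp hx).2.2)
  set k : ℕ := I.card with hk
  have hk1 : 1 ≤ k := by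
    by_contra h
    push_neg at h
    interval_cases k
    omega
  have hqk : q ≤ k := by omega
  -- the fixed set
  set F : Finset (Fin n) := Finset.univ.filter (fun x : Fin n => (x : ℕ) < m ∧ π x = x) with hFdef
  -- low set cardinality
  have hlowcard : (Finset.univ.filter (fun x : Fin n => (x : ℕ) < m)).card = m := by
    have hmap : Finset.univ.filter (fun x : Fin n => (x : ℕ) < m)
        = (Finset.univ : Finset (Fin m)).map (Fin.castLEEmb hm) := by
      ext x
      simp only [Finset.mem_filter, Finset.mem_univ, true_and, Finset.mem_map]
      constructor
      · intro hx
        exact ⟨⟨(x : ℕ), hx⟩, by ext; simp⟩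
      · rintro ⟨y, -, rfl⟩
        simp
    rw [hmap, Finset.card_map, Finset.card_univ, Fintype.card_fin]
  have hDF : D ∪ F = Finset.univ.filter (fun x : Fin n => (x : ℕ) < m) := by
    ext x
    simp only [hDdef, hFdef, Finset.mem_union, Finset.mem_filter, Finset.mem_univ, true_and]
    tauto
  have hDFdisj : Disjoint D F := by
    rw [Finset.disjoint_left]
    intro x hx hx'
    rw [hDdef, Finset.mem_filter] at hx
    rw [hFdef, Finset.mem_filter] at hx'
    exact hx.2.2 hx'.2.2
  have hdm : d ≤ m := by
    rw [hd, ← hlowcard]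
    apply Finset.card_le_card
    rw [hDdef]
    intro x hx
    simp only [Finset.mem_filter] at hx ⊢
    exact ⟨hx.1, hx.2.1⟩
  have hFcard : F.card = m - d := by
    have := Finset.card_union_of_disjoint hDFdisj
    rw [hDF, hlowcard] at this
    omega
  -- basic membership facts
  have hI_moved : ∀ x ∈ I, π x ≠ x := fun x hx => (Finset.mem_filter.mp (hIsub hx)).2.2
  have hI_low : ∀ x ∈ I, (x : ℕ) < m := fun x hx => (Finset.mem_filter.mp (hIsub hx)).2.1
  have hF_fix : ∀ x ∈ F, π x = x := fun x hx => (Finset.mem_filter.mp hx).2.2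
  have hF_low : ∀ x ∈ F, (x : ℕ) < m := fun x hx => (Finset.mem_filter.mp hx).2.1
  have hI_nF : ∀ x ∈ I, x ∉ F := fun x hx hx' => hI_moved x hx (hF_fix x hx')
  have hP_nI : ∀ x ∈ I, π x ∉ I := hIgood
  have hP_moved : ∀ x ∈ I, π (π x) ≠ π x := by
    intro x hx h
    exact hI_moved x hx (π.injective h)
  have hP_nF : ∀ x ∈ I, π x ∉ F := fun x hx hx' => hP_moved x hx (hF_fix _ hx')
  -- junk default element
  obtain ⟨x₀, hx₀⟩ : ∃ x, x ∈ I := by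
    have : I.Nonempty := Finset.card_pos.mp (by omega)
    exact this
  have hx₀ne : π x₀ ≠ x₀ := hI_moved x₀ hx₀
  have d0 : {p : Fin n × Fin n // p.1 < p.2} :=
    if h : π x₀ < x₀ then ⟨(π x₀, x₀), h⟩
    else ⟨(x₀, π x₀), lt_of_le_of_ne (not_lt.mp h) hx₀ne.symm⟩
  -- sorting function
  set srt : Fin n → Fin n → {p : Fin n × Fin n // p.1 < p.2} := fun a b =>
    if h : a < b then ⟨(a, b), h⟩ else if h' : b < a then ⟨(b, a), h'⟩ else d0 with hsrt
  have hsrtX : ∀ a b : Fin n, a ≠ b → X (srt a b).1.1 (srt a b).1.2 = X a b := by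
    intro a b hab
    rcases lt_or_gt_of_ne hab with h | h
    · simp [hsrt, h]
    · have h2 : ¬ a < b := not_lt_of_gt h
      simp [hsrt, h2, h]
      exact (hX b a)
  have hsrtset : ∀ a b : Fin n, a ≠ b →
      ({(srt a b).1.1, (srt a b).1.2} : Set (Fin n)) = {a, b} := by
    intro a b hab
    rcases lt_or_gt_of_ne hab with h | h
    · simp [hsrt, h]
    · have h2 : ¬ a < b := not_lt_of_gt h
      simp [hsrt, h2, h]
      exact Set.pair_comm b a
  -- coordinate set
  set cset : {p : Fin n × Fin n // p.1 < p.2} → Set (Fin n) :=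
    fun p => {p.1.1, p.1.2} with hcset
  have hcset_inj : ∀ p q : {p : Fin n × Fin n // p.1 < p.2}, cset p = cset q → p = q := by
    rintro ⟨⟨a, b⟩, hab⟩ ⟨⟨c, dd⟩, hcd⟩ h
    obtain ⟨h1, h2⟩ := cset_inj hab hcd h
    subst h1; subst h2; rfl
  -- constraint system
  set T : Finset ((Fin n × Fin n) ⊕ Finset (Fin n)) :=
    (I ×ˢ F).disjSum (I.powersetCard 2) with hT
  set e : (Fin n × Fin n) ⊕ Finset (Fin n) → {p : Fin n × Fin n // p.1 < p.2} :=
    Sum.elim (fun p => srt p.1 p.2)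
      (fun s => if h : s.Nonempty then srt (s.min' h) (s.max' h) else d0) with he
  set f : (Fin n × Fin n) ⊕ Finset (Fin n) → {p : Fin n × Fin n // p.1 < p.2} :=
    Sum.elim (fun p => srt (π p.1) (π p.2))
      (fun s => if h : s.Nonempty then srt (π (s.min' h)) (π (s.max' h)) else d0) with hf
  have hcls : ∀ t ∈ T,
      ∃ u v : Fin n, u ∈ I ∧ (v ∈ I ∨ v ∈ F) ∧ u ≠ v ∧ (u : ℕ) < m ∧ (v : ℕ) < m ∧
        cset (e t) = {u, v} ∧ cset (f t) = {π u, π v} ∧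
        X (e t).1.1 (e t).1.2 = X u v ∧ X (f t).1.1 (f t).1.2 = X (π u) (π v) ∧
        ((v ∈ F ∧ t = Sum.inl (u, v)) ∨
         (∃ s : Finset (Fin n), t = Sum.inr s ∧ (↑s : Set (Fin n)) = {u, v} ∧ v ∈ I)) := by
    rintro (p | s) ht
    · rw [hT, Finset.inl_mem_disjSum, Finset.mem_product] at ht
      obtain ⟨hi, hj⟩ := ht
      have hne : p.1 ≠ p.2 := fun h => hI_nF p.1 hi (h ▸ hj)
      have hne' : π p.1 ≠ π p.2 := fun h => hne (π.injective h)
      refine ⟨p.1, p.2, hi, Or.inr hj, hne, hI_low _ hi, hF_low _ hj, ?_, ?_, ?_, ?_, ?_⟩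
      · rw [he]; exact hsrtset p.1 p.2 hne
      · rw [hf]; exact hsrtset _ _ hne'
      · rw [he]; exact hsrtX p.1 p.2 hne
      · rw [hf]; exact hsrtX _ _ hne'
      · exact Or.inl ⟨hj, by simp⟩
    · rw [hT, Finset.inr_mem_disjSum, Finset.mem_powersetCard] at ht
      obtain ⟨hsub, hcard2⟩ := ht
      have h1 : s.Nonempty := Finset.card_pos.mp (by omega)
      set a : Fin n := s.min' h1 with ha
      set b : Fin n := s.max' h1 with hb
      have hab : a < b := s.min'_lt_max'_of_card (by omega)
      have haI : a ∈ I := hsub (s.min'_mem h1)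
      have hbI : b ∈ I := hsub (s.max'_mem h1)
      have habne : a ≠ b := ne_of_lt hab
      have hsab : s = {a, b} := by
        apply (Finset.eq_of_subset_of_card_le ?_ ?_).symm
        · intro x hx
          rcases Finset.mem_insert.mp hx with rfl | hx
          · exact s.min'_mem h1
          · rw [Finset.mem_singleton.mp hx]; exact s.max'_mem h1
        · rw [hcard2, Finset.card_insert_of_notMem (by simpa using habne),
            Finset.card_singleton]
      have hne' : π a ≠ π b := fun h => habne (π.injective h)
      refine ⟨a, b, haI, Or.inl hbI, habne, hI_low _ haI, hI_low _ hbI, ?_, ?_, ?_, ?_, ?_⟩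
      · rw [he]; simp only [Sum.elim_inr, dif_pos h1]; exact hsrtset a b habne
      · rw [hf]; simp only [Sum.elim_inr, dif_pos h1]; exact hsrtset _ _ hne'
      · rw [he]; simp only [Sum.elim_inr, dif_pos h1]; exact hsrtX a b habne
      · rw [hf]; simp only [Sum.elim_inr, dif_pos h1]; exact hsrtX _ _ hne'
      · refine Or.inr ⟨s, rfl, ?_, hbI⟩
        rw [hsab]; simp
  -- e-f distinctness
  have hPnotIF : ∀ x ∈ I, ∀ z : Fin n, (z ∈ I ∨ z ∈ F) → π x ≠ z := by
    rintro x hx z (hz | hz) h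
    · exact hP_nI x hx (h ▸ hz)
    · exact hP_nF x hx (h ▸ hz)
  have hef' : ∀ t ∈ T, ∀ t' ∈ T, e t ≠ f t' := by
    intro t ht t' ht' h
    obtain ⟨u, v, hu, hv, huv, -, -, hcse, -, -, -, -⟩ := hcls t ht
    obtain ⟨u', v', hu', hv', huv', -, -, -, hcsf', -, -, -⟩ := hcls t' ht'
    rw [h, hcsf'] at hcse
    -- {π u', π v'} = {u, v} with u ∈ I
    have humem : u ∈ ({π u', π v'} : Set (Fin n)) := by rw [hcse]; simp
    rcases Set.mem_insert_iff.mp humem with h2 | h2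
    · exact hPnotIF u' hu' u (Or.inl hu) h2.symm
    · rw [Set.mem_singleton_iff] at h2
      rcases hv' with hv' | hv'
      · exact hPnotIF v' hv' u (Or.inl hu) h2.symm
      · rw [hF_fix v' hv'] at h2
        exact hI_nF u hu (h2 ▸ hv')
  have hee : ∀ t ∈ T, ∀ t' ∈ T, t ≠ t' → e t ≠ e t' := by
    intro t ht t' ht' hne h
    obtain ⟨u, v, hu, hv, huv, -, -, hcse, -, -, -, hstr⟩ := hcls t ht
    obtain ⟨u', v', hu', hv', huv', -, -, hcse', -, -, -, hstr'⟩ := hcls t' ht'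
    have hsets : ({u, v} : Set (Fin n)) = {u', v'} := by rw [← hcse, ← hcse', h]
    rcases hstr with ⟨hjF, rfl⟩ | ⟨s, rfl, hs, hvI⟩ <;>
      rcases hstr' with ⟨hjF', rfl⟩ | ⟨s', rfl, hs', hvI'⟩
    · -- inl vs inl
      rcases Set.pair_eq_pair_iff.mp hsets with ⟨h1, h2⟩ | ⟨h1, h2⟩
      · exact hne (by rw [h1, h2])
      · exact hI_nF u hu (h1 ▸ hjF')
    · -- inl vs inr : v ∈ F but s' ⊆ I
      have hmv : v ∈ ({u', v'} : Set (Fin n)) := by rw [← hsets]; simp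
      rcases Set.mem_insert_iff.mp hmv with h2 | h2
      · exact hI_nF u' hu' (h2 ▸ hjF)
      · rw [Set.mem_singleton_iff] at h2
        exact hI_nF v' hvI' (h2 ▸ hjF)
    · have hmv : v' ∈ ({u, v} : Set (Fin n)) := by rw [hsets]; simp
      rcases Set.mem_insert_iff.mp hmv with h2 | h2
      · exact hI_nF u hu (h2 ▸ hjF')
      · rw [Set.mem_singleton_iff] at h2
        exact hI_nF v hvI (h2 ▸ hjF')
    · -- inr vs inr
      apply hne
      have : s = s' := Finset.coe_injective (by rw [hs, hs', hsets])
      rw [this]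
  have hff : ∀ t ∈ T, ∀ t' ∈ T, t ≠ t' → f t ≠ f t' := by
    intro t ht t' ht' hne h
    obtain ⟨u, v, hu, hv, huv, -, -, hcse, hcsf, -, -, hstr⟩ := hcls t ht
    obtain ⟨u', v', hu', hv', huv', -, -, hcse', hcsf', -, -, hstr'⟩ := hcls t' ht'
    have hsets : ({π u, π v} : Set (Fin n)) = {π u', π v'} := by rw [← hcsf, ← hcsf', h]
    have hpair : (u = u' ∧ v = v') ∨ (u = v' ∧ v = u') := by
      rcases Set.pair_eq_pair_iff.mp hsets with ⟨h1, h2⟩ | ⟨h1, h2⟩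
      · exact Or.inl ⟨π.injective h1, π.injective h2⟩
      · exact Or.inr ⟨π.injective h1, π.injective h2⟩
    rcases hstr with ⟨hjF, rfl⟩ | ⟨s, rfl, hs, hvI⟩ <;>
      rcases hstr' with ⟨hjF', rfl⟩ | ⟨s', rfl, hs', hvI'⟩
    · rcases hpair with ⟨h1, h2⟩ | ⟨h1, h2⟩
      · exact hne (by rw [h1, h2])
      · exact hI_nF u hu (h1 ▸ hjF')
    · rcases hpair with ⟨h1, h2⟩ | ⟨h1, h2⟩
      · exact hI_nF v (h2 ▸ hvI') hjF
      · exact hI_nF v (h2 ▸ hu') hjF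
    · rcases hpair with ⟨h1, h2⟩ | ⟨h1, h2⟩
      · exact hI_nF v' (h2 ▸ hvI) hjF'
      · exact hI_nF v' (h1 ▸ hu) hjF'
    · apply hne
      have hss : ({u, v} : Set (Fin n)) = {u', v'} := by
        rcases hpair with ⟨h1, h2⟩ | ⟨h1, h2⟩
        · rw [h1, h2]
        · rw [h1, h2]; exact Set.pair_comm v' u'
      have : s = s' := Finset.coe_injective (by rw [hs, hs', hss])
      rw [this]
  -- apply the independence bound
  have hboundT := indep_inter_bound hmeas hhalf hind T e f
    (fun t ht => hef' t ht t ht)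
    (fun t ht t' ht' hne =>
      ⟨hee t ht t' ht' hne, hef' t ht t' ht', fun h => hef' t' ht' t ht h.symm,
        hff t ht t' ht' hne⟩)
  -- event inclusion
  have hincl : {ω | ∀ i j : Fin n, i < j → (j : ℕ) < m → X i j ω = X (π i) (π j) ω}
      ⊆ ⋂ t ∈ (T : Set ((Fin n × Fin n) ⊕ Finset (Fin n))),
          {ω | X (e t).1.1 (e t).1.2 ω = X (f t).1.1 (f t).1.2 ω} := by
    intro ω hω
    simp only [Set.mem_iInter, Set.mem_setOf_eq, Finset.mem_coe]
    intro t ht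
    obtain ⟨u, v, hu, hv, huv, hum, hvm, -, -, hXe, hXf, -⟩ := hcls t ht
    rw [congrFun hXe ω, congrFun hXf ω]
    rcases lt_or_gt_of_ne huv with hlt | hgt
    · exact hω u v hlt hvm
    · have h1 := hω v u hgt hum
      calc X u v ω = X v u ω := congrFun (hX u v) ω
        _ = X (π v) (π u) ω := h1
        _ = X (π u) (π v) ω := congrFun (hX (π v) (π u)) ω
  -- cardinality of T
  have hTcard : T.card = k * (m - d) + Nat.choose k 2 := by
    rw [hT, Finset.card_disjSum, Finset.card_product, Finset.card_powersetCard, hFcard,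
      ← hk]
  have hexp : q * (m - d) + Nat.choose q 2 ≤ T.card := by
    rw [hTcard]
    have h1 : q * (m - d) ≤ k * (m - d) := Nat.mul_le_mul_right _ hqk
    have h2 : Nat.choose q 2 ≤ Nat.choose k 2 := Nat.choose_le_choose 2 hqk
    omega
  calc μ {ω | ∀ i j : Fin n, i < j → (j : ℕ) < m → X i j ω = X (π i) (π j) ω}
      ≤ μ (⋂ t ∈ (T : Set ((Fin n × Fin n) ⊕ Finset (Fin n))),
          {ω | X (e t).1.1 (e t).1.2 ω = X (f t).1.1 (f t).1.2 ω}) := measure_mono hincl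
    _ ≤ (1 / 2 : ℝ≥0∞) ^ T.card := hboundT
    _ ≤ (1 / 2 : ℝ≥0∞) ^ (q * (m - d) + Nat.choose q 2) := by
        exact pow_le_pow_of_le_one zero_le ENNReal.half_le_self hexp

end Core

private lemma low_card {n m : ℕ} (hm : m ≤ n) :
    (Finset.univ.filter (fun x : Fin n => (x : ℕ) < m)).card = m := by
  have hmap : Finset.univ.filter (fun x : Fin n => (x : ℕ) < m)
      = (Finset.univ : Finset (Fin m)).map (Fin.castLEEmb hm) := by
    ext x
    simp only [Finset.mem_filter, Finset.mem_univ, true_and, Finset.mem_map]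
    constructor
    · intro hx
      exact ⟨⟨(x : ℕ), hx⟩, by ext; simp⟩
    · rintro ⟨y, -, rfl⟩
      simp
  rw [hmap, Finset.card_map, Finset.card_univ, Fintype.card_fin]

private lemma fiber_card_le {n m : ℕ} (hm : m ≤ n) (S : Finset (Fin n)) :
    ((Finset.univ : Finset (Equiv.Perm (Fin n))).filter
      (fun π => Finset.univ.filter (fun x : Fin n => (x : ℕ) < m ∧ π x ≠ x) = S)).card
      ≤ Nat.factorial (n - m + S.card) := by
  classical
  set fib := (Finset.univ : Finset (Equiv.Perm (Fin n))).filter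
      (fun π => Finset.univ.filter (fun x : Fin n => (x : ℕ) < m ∧ π x ≠ x) = S) with hfib
  rcases fib.eq_empty_or_nonempty with h | ⟨π₀, hπ₀⟩
  · simp [h]
  · have hDS : ∀ π ∈ fib, Finset.univ.filter (fun x : Fin n => (x : ℕ) < m ∧ π x ≠ x) = S :=
      fun π hπ => (Finset.mem_filter.mp hπ).2
    have hSlow : ∀ x ∈ S, (x : ℕ) < m := by
      intro x hx
      rw [← hDS π₀ hπ₀, Finset.mem_filter] at hx
      exact hx.2.1
    set C : Finset (Fin n) := S ∪ Finset.univ.filter (fun x : Fin n => ¬ (x : ℕ) < m) with hC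
    have hCdisj : Disjoint S (Finset.univ.filter (fun x : Fin n => ¬ (x : ℕ) < m)) := by
      rw [Finset.disjoint_left]
      intro x hx hx'
      exact (Finset.mem_filter.mp hx').2 (hSlow x hx)
    have hhigh : (Finset.univ.filter (fun x : Fin n => ¬ (x : ℕ) < m)).card = n - m := by
      have := Finset.card_filter_add_card_filter_not
        (s := (Finset.univ : Finset (Fin n))) (p := fun x : Fin n => (x : ℕ) < m)
      rw [low_card hm] at this
      simp only [Finset.card_univ, Fintype.card_fin] at this
      omega
    have hCcard : C.card = S.card + (n - m) := by
      rw [hC, Finset.card_union_of_disjoint hCdisj, hhigh]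
    -- key: each π in fib preserves C
    have hfix : ∀ π ∈ fib, ∀ x : Fin n, x ∉ C → π x = x := by
      intro π hπ x hx
      rw [hC, Finset.mem_union, Finset.mem_filter] at hx
      push_neg at hx
      obtain ⟨hxS, hxlow⟩ := hx
      have hxm : (x : ℕ) < m := hxlow (Finset.mem_univ x)
      by_contra hne
      apply hxS
      rw [← hDS π hπ, Finset.mem_filter]
      exact ⟨Finset.mem_univ x, hxm, hne⟩
    have hkey : ∀ π ∈ fib, ∀ x : Fin n, x ∈ C ↔ π x ∈ C := by
      intro π hπ
      intro x
      constructor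
      · intro hx
        by_contra hcon
        have h1 := hfix π hπ _ hcon
        have h2 : π x = x := π.injective h1
        rw [h2] at hcon
        exact hcon hx
      · intro hx
        by_contra hcon
        rw [hfix π hπ x hcon] at hx
        exact hcon hx
    -- injection into permutations of C
    set φ : Equiv.Perm (Fin n) → Equiv.Perm {x : Fin n // x ∈ C} := fun π =>
      if h : ∀ x : Fin n, x ∈ C ↔ π x ∈ C then π.subtypePerm (fun x => (h x).symm) else 1 with hφ
    have hinj : Set.InjOn φ ↑fib := by
      intro π hπ π' hπ' heq
      rw [hφ] at heq
      dsimp only at heq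
      rw [dif_pos (hkey π (by simpa using hπ)), dif_pos (hkey π' (by simpa using hπ'))] at heq
      ext x
      by_cases hx : x ∈ C
      · have := congrArg (fun σ => (σ ⟨x, hx⟩ : {x : Fin n // x ∈ C})) heq
        have h3 : π x = π' x := by simpa [Equiv.Perm.subtypePerm] using this
        exact congrArg Fin.val h3
      · rw [hfix π (by simpa using hπ) x hx, hfix π' (by simpa using hπ') x hx]
    calc fib.card ≤ (Finset.univ : Finset (Equiv.Perm {x : Fin n // x ∈ C})).card :=
          Finset.card_le_card_of_injOn φ (fun _ _ => Finset.mem_univ _) hinj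
      _ = Nat.factorial (n - m + S.card) := by
          rw [Finset.card_univ, Fintype.card_perm, Fintype.card_coe, hCcard, Nat.add_comm]

private lemma exponent_lb {n m j : ℕ} (h23 : 2 * n ≤ 3 * m) (hmn : m ≤ n)
    (hjm : j ≤ m) (hn : 36 ≤ n) :
    j * n ≤ 216 * ((j + 2) / 3 * (m - j) + Nat.choose ((j + 2) / 3) 2) := by
  rcases Nat.eq_zero_or_pos j with rfl | hj1
  · simp
  set q := (j + 2) / 3 with hq
  have h3q : j ≤ 3 * q := by omega
  have hq1 : 1 ≤ q := by omega
  by_cases hc : 2 * j ≤ m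
  · have h1 : n ≤ 3 * (m - j) := by omega
    calc j * n ≤ (3 * q) * n := Nat.mul_le_mul_right _ h3q
      _ ≤ (3 * q) * (3 * (m - j)) := Nat.mul_le_mul_left _ h1
      _ = 9 * (q * (m - j)) := by ring
      _ ≤ 216 * (q * (m - j)) := Nat.mul_le_mul_right _ (by norm_num)
      _ ≤ 216 * (q * (m - j) + Nat.choose q 2) := Nat.mul_le_mul_left _ (Nat.le_add_right _ _)
  · push_neg at hc
    have hm24 : 24 ≤ m := by omega
    have hj13 : 13 ≤ j := by omega
    have hq5 : 5 ≤ q := by omega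
    have hn9q : n + 1 ≤ 9 * q := by omega
    have heven : Even (q * (q - 1)) := by
      have := Nat.even_mul_succ_self (q - 1)
      rwa [Nat.sub_add_cancel hq1, mul_comm] at this
    have hch : 2 * Nat.choose q 2 = q * (q - 1) := by
      rw [Nat.choose_two_right]
      obtain ⟨c, hc'⟩ := heven
      omega
    have hfin : (9 * q - 1) * (9 * q - 1) ≤ 108 * (q * (q - 1)) := by
      have h5 : (5 : ℤ) ≤ (q : ℤ) := by exact_mod_cast hq5
      zify [show 1 ≤ 9 * q by omega, hq1]
      nlinarith [h5]
    calc j * n ≤ n * n := Nat.mul_le_mul_right _ (hjm.trans hmn)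
      _ ≤ (9 * q - 1) * (9 * q - 1) := Nat.mul_le_mul (by omega) (by omega)
      _ ≤ 108 * (q * (q - 1)) := hfin
      _ = 216 * Nat.choose q 2 := by omega
      _ ≤ 216 * (q * (m - j) + Nat.choose q 2) := Nat.mul_le_mul_left _ (Nat.le_add_left _ _)

private lemma log_ineq {n : ℕ} (hn : 3500641 ≤ n) :
    216 * (2 + 3 * Real.log n) ≤ (n : ℝ) * Real.log 2 := by
  set s := Real.sqrt n with hs
  have hn0 : (0:ℝ) ≤ (n:ℝ) := by positivity
  have hsq : s ^ 2 = (n : ℝ) := Real.sq_sqrt hn0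
  have hs1871 : (1871 : ℝ) ≤ s := by
    have h1 : ((3500641 : ℕ) : ℝ) ≤ (n : ℝ) := by exact_mod_cast hn
    have h2 : Real.sqrt ((1871:ℝ)^2) ≤ s := by
      apply Real.sqrt_le_sqrt
      norm_num
      linarith
    rwa [Real.sqrt_sq (by norm_num)] at h2
  have hlogn : Real.log n = 2 * Real.log s := by
    rw [← hsq, Real.log_pow]
    norm_num
  have hlogs : Real.log s ≤ s - 1 := Real.log_le_sub_one_of_pos (by linarith)
  have hlog2 : (0.6931471803 : ℝ) < Real.log 2 := Real.log_two_gt_d9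
  have hkey : (1296.8 : ℝ) * s ≤ 0.6931471803 * s ^ 2 := by nlinarith [hs1871]
  have hmul : (0.6931471803 : ℝ) * (n : ℝ) ≤ Real.log 2 * (n : ℝ) :=
    mul_le_mul_of_nonneg_right hlog2.le hn0
  rw [hlogn]
  nlinarith [hs1871, hkey, hmul, hsq, hlogs]

private lemma geom_bound (M : ℕ) : ∑ j ∈ Finset.range M, Real.exp (-(j:ℝ)) ≤ 2 := by
  have hx : Real.exp (-1) < 1 := by
    rw [Real.exp_lt_one_iff]; norm_num
  have hx0 : 0 ≤ Real.exp (-1) := (Real.exp_pos _).le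
  have h1 : ∀ j : ℕ, Real.exp (-(j:ℝ)) = (Real.exp (-1))^j := by
    intro j
    rw [← Real.exp_nat_mul]
    norm_num
  calc ∑ j ∈ Finset.range M, Real.exp (-(j:ℝ)) = ∑ j ∈ Finset.range M, (Real.exp (-1))^j := by
        simp [h1]
    _ = ((Real.exp (-1))^M - 1) / (Real.exp (-1) - 1) := geom_sum_eq (by linarith) M
    _ ≤ 2 := by
        rw [div_le_iff_of_neg (by linarith)]
        have h2 : (0:ℝ) ≤ (Real.exp (-1))^M := pow_nonneg hx0 M
        have h3 : Real.exp (-1) ≤ 0.5 := by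
          rw [show (0.5 : ℝ) = ((2:ℝ))⁻¹ by norm_num, Real.exp_neg,
            inv_le_inv₀ (by positivity) (by norm_num)]
          exact Real.add_one_le_exp 1 |>.trans_eq' (by norm_num)
        nlinarith

private lemma rlogr_nonneg (r : ℕ) : 0 ≤ (r : ℝ) * Real.log r := by
  rcases Nat.eq_zero_or_pos r with rfl | hr
  · simp
  · apply mul_nonneg (by positivity)
    apply Real.log_nonneg
    exact_mod_cast hr

private lemma term_bound {n m r j N : ℕ} (hr : r = n - m) (h23 : 2 * n ≤ 3 * m) (hmn : m ≤ n)
    (hjm : j ≤ m) (hn : 3500641 ≤ n) (hN : j * n ≤ 216 * N) :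
    (m.choose j : ℝ) * (r + j).factorial * ((1:ℝ)/2)^N
      ≤ Real.exp (3 * r * Real.log r) * Real.exp (-(j:ℝ)) := by
  have hn2 : (2:ℝ) ≤ (n:ℝ) := by
    have : (2:ℕ) ≤ n := by omega
    exact_mod_cast this
  have hn0 : (0:ℝ) < (n:ℝ) := by linarith
  -- step 1 : choose ≤ n^j
  have h0 : (m.choose j : ℝ) ≤ (n:ℝ)^j := by
    calc (m.choose j : ℝ) ≤ ((m:ℝ))^j := by exact_mod_cast Nat.choose_le_pow m j
      _ ≤ (n:ℝ)^j := by
          apply pow_le_pow_left₀ (by positivity)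
          exact_mod_cast hmn
  -- step 2 : factorial ≤ (r+j)^(r+j)
  have h1 : ((r + j).factorial : ℝ) ≤ ((r:ℝ) + j)^(r + j) := by
    have := Nat.factorial_le_pow (r + j)
    calc ((r + j).factorial : ℝ) ≤ (((r+j):ℕ):ℝ)^(r+j) := by exact_mod_cast this
      _ = ((r:ℝ) + j)^(r + j) := by push_cast; ring_nf
  -- step 3 : (r+j)^r ≤ r^r * exp j
  have h3 : ((r:ℝ) + j)^r ≤ (r:ℝ)^r * Real.exp j := by
    rcases Nat.eq_zero_or_pos r with rfl | hrpos
    · simp [Real.exp_pos, (Real.one_le_exp (by positivity : (0:ℝ) ≤ (j:ℝ)))]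
    · have hr0 : (0:ℝ) < (r:ℝ) := by exact_mod_cast hrpos
      have hrj0 : (0:ℝ) < (r:ℝ) + j := by positivity
      have hlog : Real.log ((r:ℝ) + j) ≤ Real.log r + (j:ℝ)/(r:ℝ) := by
        have hd := Real.log_le_sub_one_of_pos (show (0:ℝ) < ((r:ℝ)+j)/(r:ℝ) by positivity)
        rw [Real.log_div (by linarith) (by linarith)] at hd
        have : ((r:ℝ)+j)/(r:ℝ) - 1 = (j:ℝ)/(r:ℝ) := by field_simp; ring
        linarith [hd.trans_eq this]
      have e1 : ((r:ℝ) + j)^r = Real.exp (r * Real.log ((r:ℝ)+j)) := by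
        rw [← Real.log_pow, Real.exp_log (by positivity)]
      have e2 : (r:ℝ)^r * Real.exp j = Real.exp (r * Real.log r + j) := by
        rw [Real.exp_add, ← Real.log_pow, Real.exp_log (by positivity)]
      rw [e1, e2]
      apply Real.exp_le_exp.mpr
      have : (r:ℝ) * ((j:ℝ)/(r:ℝ)) = j := by field_simp
      nlinarith [mul_le_mul_of_nonneg_left hlog (le_of_lt hr0)]
  -- step 4 : (r+j)^j ≤ (n^2)^j
  have h4 : ((r:ℝ) + j)^j ≤ ((n:ℝ)^2)^j := by
    apply pow_le_pow_left₀ (by positivity)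
    have hrn : (r:ℝ) ≤ n := by
      have : r ≤ n := by omega
      exact_mod_cast this
    have hjn : (j:ℝ) ≤ n := by
      have : j ≤ n := hjm.trans hmn
      exact_mod_cast this
    nlinarith
  -- step 5 : key log inequality
  have hlogkey : (j:ℝ) * (2 + 3 * Real.log n) ≤ (N:ℝ) * Real.log 2 := by
    have hjn : ((j * n : ℕ) : ℝ) ≤ ((216 * N : ℕ) : ℝ) := by exact_mod_cast hN
    push_cast at hjn
    have hli := log_ineq hn
    have hstep : (j:ℝ) * (216 * (2 + 3 * Real.log n)) ≤ (j:ℝ) * ((n:ℝ) * Real.log 2) :=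
      mul_le_mul_of_nonneg_left hli (by positivity)
    have hstep2 : (j:ℝ) * (n:ℝ) * Real.log 2 ≤ 216 * (N:ℝ) * Real.log 2 :=
      mul_le_mul_of_nonneg_right (by linarith) (Real.log_nonneg (by norm_num))
    nlinarith
  -- assemble
  have hhalfpow : ((1:ℝ)/2)^N = Real.exp (-((N:ℝ) * Real.log 2)) := by
    rw [show ((1:ℝ)/2) = Real.exp (-(Real.log 2)) by
      rw [Real.exp_neg, Real.exp_log (by norm_num)]; norm_num]
    rw [← Real.exp_nat_mul]
    congr 1
    ring
  have hnj : (n:ℝ)^j = Real.exp ((j:ℝ) * Real.log n) := by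
    rw [← Real.exp_log (show (0:ℝ) < (n:ℝ)^j by positivity), Real.log_pow]
  have hn2j : ((n:ℝ)^2)^j = Real.exp (2 * (j:ℝ) * Real.log n) := by
    rw [← Real.exp_log (show (0:ℝ) < ((n:ℝ)^2)^j by positivity), ← pow_mul, Real.log_pow]
    congr 1
    push_cast
    ring
  have hrr : (r:ℝ)^r ≤ Real.exp (3 * r * Real.log r) := by
    rcases Nat.eq_zero_or_pos r with rfl | hrpos
    · simp
    · have hr0 : (0:ℝ) < (r:ℝ) := by exact_mod_cast hrpos
      have e3 : (r:ℝ)^r = Real.exp ((r:ℝ) * Real.log r) := by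
        rw [← Real.exp_log (show (0:ℝ) < (r:ℝ)^r by positivity), Real.log_pow]
      rw [e3]
      apply Real.exp_le_exp.mpr
      have h := rlogr_nonneg r
      nlinarith
  have h1' : ((r + j).factorial : ℝ) ≤ ((r:ℝ) + j)^r * ((r:ℝ) + j)^j := by
    rw [← pow_add]; exact h1
  have hrj0 : (0:ℝ) ≤ (r:ℝ) + j := by positivity
  calc (m.choose j : ℝ) * (r + j).factorial * ((1:ℝ)/2)^N
      ≤ (n:ℝ)^j * (((r:ℝ)+j)^r * ((r:ℝ)+j)^j) * ((1:ℝ)/2)^N :=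
        mul_le_mul_of_nonneg_right
          (mul_le_mul h0 h1' (by positivity) (by positivity)) (by positivity)
      _ ≤ (n:ℝ)^j * (((r:ℝ)^r * Real.exp j) * ((n:ℝ)^2)^j) * ((1:ℝ)/2)^N :=
        mul_le_mul_of_nonneg_right
          (mul_le_mul_of_nonneg_left
            (mul_le_mul h3 h4 (by positivity) (by positivity)) (by positivity))
          (by positivity)
      _ = (r:ℝ)^r * (Real.exp ((j:ℝ) * Real.log n) * Real.exp ((j:ℝ)) *
            Real.exp (2 * (j:ℝ) * Real.log n) * Real.exp (-((N:ℝ) * Real.log 2))) := by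
        rw [hnj, hn2j, hhalfpow]
        ring
      _ = (r:ℝ)^r * Real.exp ((j:ℝ) * Real.log n + (j:ℝ) + 2 * (j:ℝ) * Real.log n
            + -((N:ℝ) * Real.log 2)) := by
        rw [← Real.exp_add, ← Real.exp_add, ← Real.exp_add]
      _ ≤ (r:ℝ)^r * Real.exp (-(j:ℝ)) :=
        mul_le_mul_of_nonneg_left
          (Real.exp_le_exp.mpr (by linarith [hlogkey])) (by positivity)
      _ ≤ Real.exp (3 * r * Real.log r) * Real.exp (-(j:ℝ)) :=
        mul_le_mul_of_nonneg_right hrr (Real.exp_nonneg _)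

private lemma real_sum_bound {n m r : ℕ} (hr : r = n - m) (h23 : 2 * n ≤ 3 * m) (hmn : m ≤ n)
    (hn : 3500641 ≤ n) :
    ∑ j ∈ Finset.range (m+1), (m.choose j : ℝ) * (r + j).factorial *
        ((1:ℝ)/2)^((j+2)/3 * (m - j) + Nat.choose ((j+2)/3) 2)
      ≤ 2 * Real.exp (3 * r * Real.log r) := by
  have hterm : ∀ j ∈ Finset.range (m+1),
      (m.choose j : ℝ) * (r + j).factorial *
          ((1:ℝ)/2)^((j+2)/3 * (m - j) + Nat.choose ((j+2)/3) 2)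
        ≤ Real.exp (3 * r * Real.log r) * Real.exp (-(j:ℝ)) := by
    intro j hj
    have hjm : j ≤ m := Nat.lt_succ_iff.mp (Finset.mem_range.mp hj)
    exact term_bound hr h23 hmn hjm hn (exponent_lb h23 hmn hjm (by omega))
  calc ∑ j ∈ Finset.range (m+1), (m.choose j : ℝ) * (r + j).factorial *
        ((1:ℝ)/2)^((j+2)/3 * (m - j) + Nat.choose ((j+2)/3) 2)
      ≤ ∑ j ∈ Finset.range (m+1), Real.exp (3 * r * Real.log r) * Real.exp (-(j:ℝ)) :=
        Finset.sum_le_sum hterm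
    _ = Real.exp (3 * r * Real.log r) * ∑ j ∈ Finset.range (m+1), Real.exp (-(j:ℝ)) := by
        rw [Finset.mul_sum]
    _ ≤ Real.exp (3 * r * Real.log r) * 2 :=
        mul_le_mul_of_nonneg_left (geom_bound _) (Real.exp_nonneg _)
    _ = 2 * Real.exp (3 * r * Real.log r) := mul_comm _ _

theorem stmt_4 :
    ∃ K₁ K₂ : ℝ, 0 < K₁ ∧ 0 < K₂ ∧
      ∀ (n m : ℕ), 1 ≤ n → 2 * n ≤ 3 * m → m ≤ n →
      ∀ (Ω : Type) (_ : MeasurableSpace Ω) (μ : Measure Ω), IsProbabilityMeasure μ →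
      ∀ (X : Fin n → Fin n → Ω → Bool),
        (∀ i j, Measurable (X i j)) →
        (∀ i j, X i j = X j i) →
        (∀ i j : Fin n, i < j → μ {ω | X i j ω = true} = 1 / 2) →
        iIndepFun
          (fun p : {p : Fin n × Fin n // p.1 < p.2} => X p.1.1 p.1.2) μ →
        ∑ π : Equiv.Perm (Fin n),
            μ {ω | ∀ i j : Fin n, i < j → (j : ℕ) < m → X i j ω = X (π i) (π j) ω}
          ≤ ENNReal.ofReal
              (K₁ * Real.exp (K₂ * ((n : ℝ) - m) * Real.log ((n : ℝ) - m))) := by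
  classical
  refine ⟨((Nat.factorial 3500641 + 2 : ℕ) : ℝ), 3, ?_, by norm_num, ?_⟩
  · have h : 0 < Nat.factorial 3500641 + 2 := by positivity
    exact_mod_cast h
  intro n m hn1 h23 hmn Ω mΩ μ hμ X hmeas hX hhalf hind
  haveI := hμ
  set r : ℕ := n - m with hrdef
  have hcast : ((n:ℝ) - m) = (r:ℝ) := by
    rw [hrdef]
    rw [Nat.cast_sub hmn]
  rw [hcast]
  have hexp_ge1 : (1:ℝ) ≤ Real.exp (3 * (r:ℝ) * Real.log r) :=
    Real.one_le_exp (by nlinarith [rlogr_nonneg r])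
  have hK2 : (2:ℝ) ≤ ((Nat.factorial 3500641 + 2 : ℕ) : ℝ) := by
    have h : 1 ≤ Nat.factorial 3500641 := Nat.one_le_iff_ne_zero.mpr (Nat.factorial_ne_zero _)
    push_cast
    have : (1:ℝ) ≤ (Nat.factorial 3500641 : ℝ) := by exact_mod_cast h
    exact le_add_of_nonneg_left (zero_le_one.trans this)
  by_cases hbig : 3500641 ≤ n
  · -- large n
    set Nexp : ℕ → ℕ := fun j => (j+2)/3 * (m - j) + Nat.choose ((j+2)/3) 2 with hNexp
    set Dmap : Equiv.Perm (Fin n) → Finset (Fin n) :=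
      fun π => Finset.univ.filter (fun x : Fin n => (x : ℕ) < m ∧ π x ≠ x) with hDmap
    set low : Finset (Fin n) := Finset.univ.filter (fun x : Fin n => (x : ℕ) < m) with hlow
    have hmapsto : ∀ π : Equiv.Perm (Fin n), π ∈ (Finset.univ : Finset (Equiv.Perm (Fin n))) →
        Dmap π ∈ low.powerset := by
      intro π _
      rw [Finset.mem_powerset, hDmap, hlow]
      intro x hx
      simp only [Finset.mem_filter] at hx ⊢
      exact ⟨hx.1, hx.2.1⟩
    have hhalf_ofReal : (1/2 : ℝ≥0∞) = ENNReal.ofReal (1/2 : ℝ) := by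
      rw [ENNReal.ofReal_div_of_pos] <;> norm_num
    calc ∑ π : Equiv.Perm (Fin n),
            μ {ω | ∀ i j : Fin n, i < j → (j : ℕ) < m → X i j ω = X (π i) (π j) ω}
        ≤ ∑ π : Equiv.Perm (Fin n), (1 / 2 : ℝ≥0∞) ^ (Nexp (Dmap π).card) :=
          Finset.sum_le_sum (fun π _ => per_perm_bound hmeas hX hhalf hind m hmn π)
      _ = ∑ S ∈ low.powerset, ∑ π ∈ Finset.univ.filter (fun π => Dmap π = S),
            (1 / 2 : ℝ≥0∞) ^ (Nexp (Dmap π).card) :=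
          (Finset.sum_fiberwise_of_maps_to hmapsto _).symm
      _ ≤ ∑ S ∈ low.powerset, ((r + S.card).factorial : ℝ≥0∞) *
            (1 / 2 : ℝ≥0∞) ^ (Nexp S.card) := by
          apply Finset.sum_le_sum
          intro S hS
          have hcongr : ∀ π ∈ Finset.univ.filter (fun π => Dmap π = S),
              (1 / 2 : ℝ≥0∞) ^ (Nexp (Dmap π).card) = (1 / 2 : ℝ≥0∞) ^ (Nexp S.card) := by
            intro π hπ
            rw [(Finset.mem_filter.mp hπ).2]
          rw [Finset.sum_congr rfl hcongr, Finset.sum_const, nsmul_eq_mul]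
          apply mul_le_mul_left
          have hfc := fiber_card_le hmn S
          rw [← hrdef] at hfc
          exact_mod_cast Nat.cast_le.mpr hfc
      _ = ∑ j ∈ Finset.range (m+1), (m.choose j) •
            (((r + j).factorial : ℝ≥0∞) * (1 / 2 : ℝ≥0∞) ^ (Nexp j)) := by
          rw [Finset.sum_powerset low
            (fun S => ((r + S.card).factorial : ℝ≥0∞) * (1 / 2 : ℝ≥0∞) ^ (Nexp S.card))]
          rw [low_card hmn]
          apply Finset.sum_congr rfl
          intro j hj
          rw [Finset.sum_powersetCard j low
            (fun c => ((r + c).factorial : ℝ≥0∞) * (1 / 2 : ℝ≥0∞) ^ (Nexp c))]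
          rw [low_card hmn]
      _ = ∑ j ∈ Finset.range (m+1), ENNReal.ofReal
            ((m.choose j : ℝ) * (r + j).factorial * ((1:ℝ)/2) ^ (Nexp j)) := by
          apply Finset.sum_congr rfl
          intro j hj
          rw [nsmul_eq_mul, hhalf_ofReal, ← ENNReal.ofReal_pow (by norm_num),
            ← ENNReal.ofReal_natCast ((r+j).factorial), ← ENNReal.ofReal_natCast (m.choose j),
            ← ENNReal.ofReal_mul (by positivity), ← ENNReal.ofReal_mul (by positivity)]
          congr 1
          ring
      _ = ENNReal.ofReal (∑ j ∈ Finset.range (m+1),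
            ((m.choose j : ℝ) * (r + j).factorial * ((1:ℝ)/2) ^ (Nexp j))) :=
          (ENNReal.ofReal_sum_of_nonneg (fun j _ => by positivity)).symm
      _ ≤ ENNReal.ofReal (((Nat.factorial 3500641 + 2 : ℕ) : ℝ) *
            Real.exp (3 * (r:ℝ) * Real.log r)) := by
          apply ENNReal.ofReal_le_ofReal
          calc ∑ j ∈ Finset.range (m+1),
                ((m.choose j : ℝ) * (r + j).factorial * ((1:ℝ)/2) ^ (Nexp j))
              ≤ 2 * Real.exp (3 * (r:ℝ) * Real.log r) :=
                real_sum_bound hrdef h23 hmn hbig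
            _ ≤ ((Nat.factorial 3500641 + 2 : ℕ) : ℝ) * Real.exp (3 * (r:ℝ) * Real.log r) :=
                mul_le_mul_of_nonneg_right hK2 (Real.exp_nonneg _)
  · -- small n
    push_neg at hbig
    calc ∑ π : Equiv.Perm (Fin n),
            μ {ω | ∀ i j : Fin n, i < j → (j : ℕ) < m → X i j ω = X (π i) (π j) ω}
        ≤ ∑ _π : Equiv.Perm (Fin n), (1 : ℝ≥0∞) :=
          Finset.sum_le_sum (fun π _ => prob_le_one)
      _ = ((Nat.factorial n : ℕ) : ℝ≥0∞) := by
          rw [Finset.sum_const, Finset.card_univ, Fintype.card_perm, Fintype.card_fin,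
            nsmul_eq_mul, mul_one]
      _ ≤ ENNReal.ofReal (((Nat.factorial 3500641 + 2 : ℕ) : ℝ) *
            Real.exp (3 * (r:ℝ) * Real.log r)) := by
          rw [← ENNReal.ofReal_natCast (Nat.factorial n)]
          apply ENNReal.ofReal_le_ofReal
          have h1 : (Nat.factorial n : ℝ) ≤ ((Nat.factorial 3500641 + 2 : ℕ) : ℝ) := by
            have h2 : Nat.factorial n ≤ Nat.factorial 3500641 :=
              Nat.factorial_le (by omega)
            push_cast
            have : (Nat.factorial n : ℝ) ≤ (Nat.factorial 3500641 : ℝ) := by exact_mod_cast h2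
            exact this.trans (le_add_of_nonneg_right (by norm_num))
          calc (Nat.factorial n : ℝ) ≤ ((Nat.factorial 3500641 + 2 : ℕ) : ℝ) := h1
            _ = ((Nat.factorial 3500641 + 2 : ℕ) : ℝ) * 1 := (mul_one _).symm
            _ ≤ ((Nat.factorial 3500641 + 2 : ℕ) : ℝ) *
                Real.exp (3 * (r:ℝ) * Real.log r) := by
                apply mul_le_mul_of_nonneg_left hexp_ge1 (by positivity)
end
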